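/- Let A be a complex Banach algebra and ε : A → ℂ a nonzero continuous algebra homomorphism (character), and let A₀ = ker ε. Suppose that A₀ is commutative (a b = b a for all a, b ∈ A₀) and that A₀ equals the closed linear span of the set of products {a b : a, b ∈ A₀}. Then A is commutative. -/

import Mathlib

/-- Let `A` be a complex Banach algebra and `ε : A → ℂ` a nonzero
continuous character with augmentation ideal `A₀ = ker ε`. If `A₀` is
commutative and `A₀` equals the closed linear span of products of elements of
`A₀`, then `A` is commutative. -/
theorem commutative_of_augmentation_ideal_commutative_span
    {A : Type*} [NonUnitalNormedRing A] [NormedSpace ℂ A]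
    [IsScalarTower ℂ A A] [SMulCommClass ℂ A A] [CompleteSpace A]
    (ε : A →L[ℂ] ℂ) (hε0 : ε ≠ 0)
    (hεm : ∀ a b : A, ε (a * b) = ε a * ε b)
    (hcomm : ∀ a b : A, ε a = 0 → ε b = 0 → a * b = b * a)
    (hspan : {x : A | ε x = 0} =
      closure (Submodule.span ℂ
        {x : A | ∃ a b : A, ε a = 0 ∧ ε b = 0 ∧ x = a * b} : Set A)) :
    ∀ a b : A, a * b = b * a := by
  obtain ⟨x, hx⟩ : ∃ x, ε x ≠ 0 := by
    by_contra h
    push_neg at h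
    exact hε0 (ContinuousLinearMap.ext fun y => by simp [h y])
  set e : A := (ε x)⁻¹ • x with he_def
  have hee : ε e = 1 := by
    simp [he_def, inv_mul_cancel₀ hx]
  -- the commutator-with-e map
  set L : A →L[ℂ] A :=
    ContinuousLinearMap.mul ℂ A e - (ContinuousLinearMap.mul ℂ A).flip e with hLdef
  have hL : ∀ y : A, L y = e * y - y * e := fun y => rfl
  -- e commutes with every element of ker ε
  have hcomm_e : ∀ y : A, ε y = 0 → e * y = y * e := by
    intro y hy
    have hy' : y ∈ closure (Submodule.span ℂ
        {x : A | ∃ a b : A, ε a = 0 ∧ ε b = 0 ∧ x = a * b} : Set A) := by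
      rw [← hspan]; exact hy
    have hsub : (Submodule.span ℂ
        {x : A | ∃ a b : A, ε a = 0 ∧ ε b = 0 ∧ x = a * b} : Set A) ⊆
        (LinearMap.ker (L : A →ₗ[ℂ] A) : Set A) := by
      intro z hz
      refine Submodule.span_le.mpr ?_ hz
      rintro _ ⟨a, b, ha, hb, rfl⟩
      have hea : ε (e * a) = 0 := by rw [hεm, ha, mul_zero]
      have hbe : ε (b * e) = 0 := by rw [hεm, hb, zero_mul]
      have : e * (a * b) = (a * b) * e := by
        calc e * (a * b) = (e * a) * b := by rw [mul_assoc]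
          _ = b * (e * a) := hcomm _ _ hea hb
          _ = (b * e) * a := by rw [mul_assoc]
          _ = a * (b * e) := (hcomm _ _ ha hbe).symm
          _ = (a * b) * e := by rw [mul_assoc]
      simp only [SetLike.mem_coe, LinearMap.mem_ker, ContinuousLinearMap.coe_coe]
      rw [hL, this, sub_self]
    have hclosed : IsClosed (LinearMap.ker (L : A →ₗ[ℂ] A) : Set A) := ContinuousLinearMap.isClosed_ker L
    have := closure_minimal hsub hclosed hy'
    have hLy : L y = 0 := this
    rw [hL] at hLy
    exact sub_eq_zero.mp hLy
  intro a b
  set a0 : A := a - ε a • e with ha0_def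
  set b0 : A := b - ε b • e with hb0_def
  clear_value a0 b0
  have ha0 : ε a0 = 0 := by simp [ha0_def, hee]
  have hb0 : ε b0 = 0 := by simp [hb0_def, hee]
  have h1 : e * a0 = a0 * e := hcomm_e a0 ha0
  have h2 : e * b0 = b0 * e := hcomm_e b0 hb0
  have h3 : a0 * b0 = b0 * a0 := hcomm a0 b0 ha0 hb0
  have ha : a = ε a • e + a0 := by rw [ha0_def]; abel
  have hb : b = ε b • e + b0 := by rw [hb0_def]; abel
  calc a * b = (ε a • e + a0) * (ε b • e + b0) := by rw [← ha, ← hb]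
    _ = (ε a * ε b) • (e * e) + ε a • (e * b0) + ε b • (a0 * e) + a0 * b0 := by
        simp only [mul_add, add_mul, smul_mul_assoc, mul_smul_comm, smul_smul]
        module
    _ = (ε b * ε a) • (e * e) + ε b • (e * a0) + ε a • (b0 * e) + b0 * a0 := by
        rw [h1, h2, h3, mul_comm (ε a) (ε b)]
        abel
    _ = (ε b • e + b0) * (ε a • e + a0) := by
        simp only [mul_add, add_mul, smul_mul_assoc, mul_smul_comm, smul_smul]
        module
    _ = b * a := by rw [← ha, ← hb]
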